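/- There is no injective monotone map from an open nonempty subset of ℝ² into ℝ, where ℝ² carries euclidean betweenness and ℝ carries order betweenness. -/

import Mathlib

set_option maxHeartbeats 1600000

open Metric Set

private lemma lin_eval (ℓ : (ℝ × ℝ) →L[ℝ] ℝ) (z : ℝ × ℝ) :
    ℓ z = z.1 * ℓ (1, 0) + z.2 * ℓ (0, 1) := by
  have hz : z = z.1 • ((1:ℝ), (0:ℝ)) + z.2 • ((0:ℝ), (1:ℝ)) := by
    ext <;> simp
  calc ℓ z = ℓ (z.1 • ((1:ℝ), (0:ℝ)) + z.2 • ((0:ℝ), (1:ℝ))) := by rw [← hz]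
    _ = z.1 * ℓ (1, 0) + z.2 * ℓ (0, 1) := by
        rw [map_add, map_smul, map_smul, smul_eq_mul, smul_eq_mul]

private lemma lin_ne_zero_coord (ℓ : (ℝ × ℝ) →L[ℝ] ℝ) (h : ℓ ≠ 0) :
    ℓ (1, 0) ≠ 0 ∨ ℓ (0, 1) ≠ 0 := by
  by_contra hc
  push_neg at hc
  exact h (ContinuousLinearMap.ext fun z => by rw [lin_eval, hc.1, hc.2]; simp)

private lemma dep_of_no_quadrant (ℓ₁ ℓ₂ : (ℝ × ℝ) →L[ℝ] ℝ) (h1 : ℓ₁ ≠ 0)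
    (h : ¬ ∃ d : ℝ × ℝ, ℓ₁ d = -1 ∧ ℓ₂ d = 1) : ∃ t : ℝ, ℓ₂ = t • ℓ₁ := by
  set a1 := ℓ₁ (1, 0) with ha1
  set a2 := ℓ₁ (0, 1) with ha2
  set b1 := ℓ₂ (1, 0) with hb1
  set b2 := ℓ₂ (0, 1) with hb2
  by_cases hdet : a1 * b2 - a2 * b1 = 0
  · rcases lin_ne_zero_coord ℓ₁ h1 with hA | hA
    · refine ⟨b1 / a1, ContinuousLinearMap.ext fun z => ?_⟩
      rw [ContinuousLinearMap.smul_apply, smul_eq_mul, lin_eval ℓ₂ z, lin_eval ℓ₁ z,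
        ← ha1, ← ha2, ← hb1, ← hb2]
      rw [← ha1] at hA
      field_simp
      linear_combination z.2 * hdet
    · refine ⟨b2 / a2, ContinuousLinearMap.ext fun z => ?_⟩
      rw [ContinuousLinearMap.smul_apply, smul_eq_mul, lin_eval ℓ₂ z, lin_eval ℓ₁ z,
        ← ha1, ← ha2, ← hb1, ← hb2]
      rw [← ha2] at hA
      field_simp
      linear_combination (-z.1) * hdet
  · exfalso
    apply h
    refine ⟨((-b2 - a2) / (a1 * b2 - a2 * b1), (a1 + b1) / (a1 * b2 - a2 * b1)), ?_, ?_⟩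
    · rw [lin_eval]
      show (-b2 - a2) / (a1 * b2 - a2 * b1) * a1 + (a1 + b1) / (a1 * b2 - a2 * b1) * a2 = -1
      rw [div_mul_eq_mul_div, div_mul_eq_mul_div, ← add_div, div_eq_iff hdet]
      ring
    · rw [lin_eval]
      show (-b2 - a2) / (a1 * b2 - a2 * b1) * b1 + (a1 + b1) / (a1 * b2 - a2 * b1) * b2 = 1
      rw [div_mul_eq_mul_div, div_mul_eq_mul_div, ← add_div, div_eq_iff hdet]
      ring

private lemma perturb {p x : ℝ × ℝ} {r : ℝ} (hx : x ∈ ball p r) (v : ℝ × ℝ) (ε : ℝ)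
    (hε : 0 < ε) : ∃ c : ℝ, 0 < c ∧ x + c • v ∈ ball p r ∧ x - c • v ∈ ball p r ∧ ‖c • v‖ < ε := by
  have hd : dist x p < r := mem_ball.mp hx
  set c := min ((r - dist x p) / (2 * (‖v‖ + 1))) (ε / (2 * (‖v‖ + 1))) with hc
  have hv1 : (0:ℝ) < ‖v‖ + 1 := by positivity
  have hc0 : 0 < c := by
    apply lt_min
    · apply div_pos (by linarith) (by positivity)
    · apply div_pos hε (by positivity)
  have hnorm : ‖c • v‖ ≤ c * (‖v‖ + 1) := by
    rw [norm_smul, Real.norm_eq_abs, abs_of_pos hc0]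
    nlinarith [hc0]
  have h1 : c * (‖v‖ + 1) ≤ (r - dist x p) / 2 := by
    have := min_le_left ((r - dist x p) / (2 * (‖v‖ + 1))) (ε / (2 * (‖v‖ + 1)))
    rw [← hc] at this
    calc c * (‖v‖ + 1) ≤ (r - dist x p) / (2 * (‖v‖ + 1)) * (‖v‖ + 1) := by
          exact mul_le_mul_of_nonneg_right this hv1.le
      _ = (r - dist x p) / 2 := by field_simp
  have h2 : c * (‖v‖ + 1) ≤ ε / 2 := by
    have := min_le_right ((r - dist x p) / (2 * (‖v‖ + 1))) (ε / (2 * (‖v‖ + 1)))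
    rw [← hc] at this
    calc c * (‖v‖ + 1) ≤ ε / (2 * (‖v‖ + 1)) * (‖v‖ + 1) := by
          exact mul_le_mul_of_nonneg_right this hv1.le
      _ = ε / 2 := by field_simp
  have hplus : dist (x + c • v) x = ‖c • v‖ := by
    rw [dist_eq_norm, add_sub_cancel_left]
  have hminus : dist (x - c • v) x = ‖c • v‖ := by
    rw [dist_eq_norm]
    have : x - c • v - x = -(c • v) := by abel
    rw [this, norm_neg]
  refine ⟨c, hc0, ?_, ?_, ?_⟩
  · rw [mem_ball]
    calc dist (x + c • v) p ≤ dist (x + c • v) x + dist x p := dist_triangle _ _ _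
      _ < r := by rw [hplus]; nlinarith [hnorm, h1, hd]
  · rw [mem_ball]
    calc dist (x - c • v) p ≤ dist (x - c • v) x + dist x p := dist_triangle _ _ _
      _ < r := by rw [hminus]; nlinarith [hnorm, h1, hd]
  · nlinarith [hnorm, h2]

private lemma combo_lt {s t A B X : ℝ} (hs : 0 ≤ s) (ht : 0 ≤ t) (hst : s + t = 1)
    (hA : A < X) (hB : B < X) : s * A + t * B < X := by
  rcases eq_or_lt_of_le hs with h | h
  · have hts : t = 1 := by linarith
    rw [← h, hts]; linarith
  · have h1 : s * A < s * X := mul_lt_mul_of_pos_left hA h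
    have h2 : t * B ≤ t * X := mul_le_mul_of_nonneg_left hB.le ht
    have h3 : s * X + t * X = X := by linear_combination X * hst
    linarith

private lemma combo_gt {s t A B X : ℝ} (hs : 0 ≤ s) (ht : 0 ≤ t) (hst : s + t = 1)
    (hA : X < A) (hB : X < B) : X < s * A + t * B := by
  have := combo_lt hs ht hst (neg_lt_neg hA) (neg_lt_neg hB)
  nlinarith

private lemma hit_combo {A B X : ℝ} (hA : A < X) (hB : X < B) :
    ∃ s t : ℝ, 0 ≤ s ∧ 0 ≤ t ∧ s + t = 1 ∧ s * A + t * B = X := by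
  have hBA : (0:ℝ) < B - A := by linarith
  refine ⟨(B - X) / (B - A), (X - A) / (B - A),
    div_nonneg (by linarith) hBA.le, div_nonneg (by linarith) hBA.le, ?_, ?_⟩
  · field_simp; ring
  · field_simp
    ring

section Main

variable {U : Set (ℝ × ℝ)} {f : ℝ × ℝ → ℝ} {p : ℝ × ℝ} {r : ℝ}

private lemma strictBtw (hKU : closedBall p r ⊆ U) (hinj : Set.InjOn f U)
    (H : ∀ a b x, a ∈ U → b ∈ U → x ∈ U → x ∈ segment ℝ a b → f x ∈ Set.uIcc (f a) (f b))
    {a b x : ℝ × ℝ} (ha : a ∈ closedBall p r) (hb : b ∈ closedBall p r)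
    (hx : x ∈ closedBall p r) (hseg : x ∈ segment ℝ a b) (hxa : x ≠ a) (hxb : x ≠ b) :
    min (f a) (f b) < f x ∧ f x < max (f a) (f b) := by
  have h1 := H a b x (hKU ha) (hKU hb) (hKU hx) hseg
  rw [Set.mem_uIcc] at h1
  have hfa : f x ≠ f a := fun h => hxa (hinj (hKU hx) (hKU ha) h)
  have hfb : f x ≠ f b := fun h => hxb (hinj (hKU hx) (hKU hb) h)
  rcases h1 with ⟨h2, h3⟩ | ⟨h2, h3⟩
  · constructor
    · exact lt_of_le_of_lt (min_le_left _ _) (lt_of_le_of_ne h2 (Ne.symm hfa))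
    · exact lt_of_lt_of_le (lt_of_le_of_ne h3 hfb) (le_max_right _ _)
  · constructor
    · exact lt_of_le_of_lt (min_le_right _ _) (lt_of_le_of_ne h2 (Ne.symm hfb))
    · exact lt_of_lt_of_le (lt_of_le_of_ne h3 hfa) (le_max_left _ _)

private lemma sep_lemma (hr : 0 < r) (hKU : closedBall p r ⊆ U) (hinj : Set.InjOn f U)
    (H : ∀ a b x, a ∈ U → b ∈ U → x ∈ U → x ∈ segment ℝ a b → f x ∈ Set.uIcc (f a) (f b))
    {x : ℝ × ℝ} (hx : x ∈ ball p r) :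
    ∃ ℓ : (ℝ × ℝ) →L[ℝ] ℝ, ℓ ≠ 0 ∧
      (∀ z ∈ closedBall p r, ℓ z < ℓ x → f z < f x) ∧
      (∀ z ∈ closedBall p r, ℓ x < ℓ z → f x < f z) := by
  set A : Set (ℝ × ℝ) := {z | z ∈ closedBall p r ∧ f z ≤ f x} with hA
  set B : Set (ℝ × ℝ) := {z | z ∈ closedBall p r ∧ f x ≤ f z} with hB
  have hxK : x ∈ closedBall p r := ball_subset_closedBall hx
  have hxA : x ∈ A := ⟨hxK, le_refl _⟩
  have hxB : x ∈ B := ⟨hxK, le_refl _⟩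
  have hval : ∀ a b : ℝ × ℝ, a ∈ closedBall p r → b ∈ closedBall p r →
      ∀ s t : ℝ, 0 ≤ s → 0 ≤ t → s + t = 1 →
      (f (s • a + t • b) ≤ f a ∨ f (s • a + t • b) ≤ f b) ∧
      (f a ≤ f (s • a + t • b) ∨ f b ≤ f (s • a + t • b)) := by
    intro a b ha hb s t hs ht hst
    have hz : s • a + t • b ∈ closedBall p r :=
      (convex_closedBall p r) ha hb hs ht hst
    have hseg : s • a + t • b ∈ segment ℝ a b := ⟨s, t, hs, ht, hst, rfl⟩
    have := H a b _ (hKU ha) (hKU hb) (hKU hz) hseg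
    rw [Set.mem_uIcc] at this
    rcases this with ⟨h1, h2⟩ | ⟨h1, h2⟩
    · exact ⟨Or.inr h2, Or.inl h1⟩
    · exact ⟨Or.inl h2, Or.inr h1⟩
  have hconvA : Convex ℝ A := by
    intro a ha b hb s t hs ht hst
    refine ⟨(convex_closedBall p r) ha.1 hb.1 hs ht hst, ?_⟩
    rcases (hval a b ha.1 hb.1 s t hs ht hst).1 with h | h
    · exact le_trans h ha.2
    · exact le_trans h hb.2
  have hconvB : Convex ℝ B := by
    intro a ha b hb s t hs ht hst
    refine ⟨(convex_closedBall p r) ha.1 hb.1 hs ht hst, ?_⟩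
    rcases (hval a b ha.1 hb.1 s t hs ht hst).2 with h | h
    · exact le_trans ha.2 h
    · exact le_trans hb.2 h
  -- affine span of A is everything
  have hspan : affineSpan ℝ A = ⊤ := by
    by_contra hne
    have hnee : (affineSpan ℝ A : Set (ℝ × ℝ)).Nonempty := ⟨x, subset_affineSpan ℝ A hxA⟩
    have hdir : (affineSpan ℝ A).direction ≠ ⊤ := by
      intro h
      exact hne ((AffineSubspace.direction_eq_top_iff_of_nonempty hnee).mp h)
    obtain ⟨v, hv⟩ : ∃ v, v ∉ (affineSpan ℝ A).direction := by
      by_contra hc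
      push_neg at hc
      exact hdir (Submodule.eq_top_iff'.mpr hc)
    have hv0 : v ≠ 0 := fun h => hv (h ▸ Submodule.zero_mem _)
    obtain ⟨c, hc, hpl, hmn, _⟩ := perturb hx v 1 one_pos
    have hcv : c • v ≠ 0 := smul_ne_zero (ne_of_gt hc) hv0
    have hxa : x ≠ x - c • v := by
      intro h
      apply hcv
      have := sub_eq_self.mp h.symm
      exact this
    have hxb : x ≠ x + c • v := by
      intro h
      exact hcv (add_eq_left.mp h.symm)
    have hstrict := strictBtw hKU hinj H (ball_subset_closedBall hmn)
      (ball_subset_closedBall hpl) hxK (mem_segment_sub_add (𝕜 := ℝ) x (c • v)) hxa hxb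
    rcases min_lt_iff.mp hstrict.1 with hlt | hlt
    · have hyA : x - c • v ∈ A := ⟨ball_subset_closedBall hmn, hlt.le⟩
      have hmem := AffineSubspace.vsub_mem_direction (subset_affineSpan ℝ A hyA)
        (subset_affineSpan ℝ A hxA)
      have : (x - c • v) -ᵥ x = -(c • v) := by
        rw [vsub_eq_sub]; abel
      rw [this] at hmem
      have hmem2 : c • v ∈ (affineSpan ℝ A).direction := by
        have := (affineSpan ℝ A).direction.neg_mem hmem
        simpa using this
      have : v ∈ (affineSpan ℝ A).direction := by
        have := (affineSpan ℝ A).direction.smul_mem c⁻¹ hmem2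
        rwa [smul_smul, inv_mul_cancel₀ (ne_of_gt hc), one_smul] at this
      exact hv this
    · have hyA : x + c • v ∈ A := ⟨ball_subset_closedBall hpl, hlt.le⟩
      have hmem := AffineSubspace.vsub_mem_direction (subset_affineSpan ℝ A hyA)
        (subset_affineSpan ℝ A hxA)
      have : (x + c • v) -ᵥ x = c • v := by
        rw [vsub_eq_sub]; abel
      rw [this] at hmem
      have : v ∈ (affineSpan ℝ A).direction := by
        have := (affineSpan ℝ A).direction.smul_mem c⁻¹ hmem
        rwa [smul_smul, inv_mul_cancel₀ (ne_of_gt hc), one_smul] at this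
      exact hv this
  have hintA : (interior A).Nonempty :=
    hconvA.interior_nonempty_iff_affineSpan_eq_top.mpr hspan
  have hxnotint : x ∉ interior A := by
    intro hxi
    obtain ⟨ε, hε, hball⟩ := Metric.isOpen_iff.mp isOpen_interior x hxi
    obtain ⟨c, hc, hpl, hmn, hsmall⟩ := perturb hx ((1:ℝ), (0:ℝ)) ε hε
    have hcv : c • ((1:ℝ), (0:ℝ)) ≠ 0 := by
      apply smul_ne_zero (ne_of_gt hc)
      intro h
      have := congrArg Prod.fst h
      simpa using this
    have hxa : x ≠ x - c • ((1:ℝ), (0:ℝ)) := by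
      intro h
      exact hcv (sub_eq_self.mp h.symm)
    have hxb : x ≠ x + c • ((1:ℝ), (0:ℝ)) := by
      intro h
      exact hcv (add_eq_left.mp h.symm)
    have hstrict := strictBtw hKU hinj H (ball_subset_closedBall hmn)
      (ball_subset_closedBall hpl) hxK
      (mem_segment_sub_add (𝕜 := ℝ) x (c • ((1:ℝ), (0:ℝ)))) hxa hxb
    rcases lt_max_iff.mp hstrict.2 with hgt | hgt
    · have : x - c • ((1:ℝ), (0:ℝ)) ∈ interior A := by
        apply hball
        rw [mem_ball]
        rw [dist_eq_norm]
        have : x - c • ((1:ℝ), (0:ℝ)) - x = -(c • ((1:ℝ), (0:ℝ))) := by abel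
        rw [this, norm_neg]
        exact hsmall
      exact absurd (interior_subset this).2 (not_le.mpr hgt)
    · have : x + c • ((1:ℝ), (0:ℝ)) ∈ interior A := by
        apply hball
        rw [mem_ball, dist_eq_norm, add_sub_cancel_left]
        exact hsmall
      exact absurd (interior_subset this).2 (not_le.mpr hgt)
  have hdisj : Disjoint (interior A) B := by
    rw [Set.disjoint_left]
    intro z hzi hzB
    have hzA : z ∈ A := interior_subset hzi
    have : z = x := hinj (hKU hzA.1) (hKU hxK) (le_antisymm hzA.2 hzB.2)
    rw [this] at hzi
    exact hxnotint hzi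
  obtain ⟨ℓ, u, hlt, hge⟩ :=
    geometric_hahn_banach_open (hconvA.interior) isOpen_interior hconvB hdisj
  have hAle : ∀ a ∈ A, ℓ a ≤ u := by
    intro a ha
    by_contra hgt
    push_neg at hgt
    obtain ⟨w, hw⟩ := hintA
    have hw' := hlt w hw
    set D := ℓ a - ℓ w with hD
    have hD0 : 0 < D := by rw [hD]; linarith
    set t := (u - ℓ w + D) / (2 * D) with ht
    have ht0 : 0 < t := by
      apply div_pos
      · linarith
      · linarith
    have ht1 : t < 1 := by
      rw [ht, div_lt_one (by linarith : (0:ℝ) < 2 * D)]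
      linarith
    have hz : (1 - t) • w + t • a ∈ interior A :=
      hconvA.combo_interior_self_mem_interior hw ha (by linarith) ht0.le (by ring)
    have hzval : ℓ ((1 - t) • w + t • a) = ℓ w + t * D := by
      rw [map_add, map_smul, map_smul, smul_eq_mul, smul_eq_mul, hD]
      ring
    have htD : t * D = (u - ℓ w + D) / 2 := by
      rw [ht]
      field_simp
    have := hlt _ hz
    rw [hzval, htD] at this
    linarith
  have hux : ℓ x = u := le_antisymm (hAle x hxA) (hge x hxB)
  have hne0 : ℓ ≠ 0 := by
    intro h0
    obtain ⟨w, hw⟩ := hintA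
    have h1 : (0:ℝ) < u := by
      have := hlt w hw
      rw [h0] at this
      simpa using this
    have h2 : (0:ℝ) = u := by
      rw [h0] at hux
      simpa using hux
    linarith
  refine ⟨ℓ, hne0, ?_, ?_⟩
  · intro z hz hzlt
    by_contra h
    push_neg at h
    have hzB : z ∈ B := ⟨hz, h⟩
    have := hge z hzB
    rw [← hux] at this
    linarith
  · intro z hz hzgt
    by_contra h
    push_neg at h
    have hzA : z ∈ A := ⟨hz, h⟩
    have := hAle z hzA
    rw [hux] at hzgt
    linarith

end Main

/-- There is no injective monotone map from a nonempty open planar set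
into the real line. -/
theorem stmt_14 (U : Set (ℝ × ℝ)) (hU : IsOpen U) (hne : U.Nonempty)
    (f : ℝ × ℝ → ℝ) (hinj : Set.InjOn f U) :
    ¬ (∀ a b x, a ∈ U → b ∈ U → x ∈ U → x ∈ segment ℝ a b →
        f x ∈ Set.uIcc (f a) (f b)) := by
  intro H
  obtain ⟨p0, hp0⟩ := hne
  obtain ⟨R, hR, hRsub⟩ := Metric.isOpen_iff.mp hU p0 hp0
  have hr : 0 < R / 2 := by linarith
  have hKU : closedBall p0 (R / 2) ⊆ U :=
    subset_trans (closedBall_subset_ball (by linarith)) hRsub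
  set r : ℝ := R / 2 with hrdef
  have hsep : ∀ x : ℝ × ℝ, ∃ ℓ : (ℝ × ℝ) →L[ℝ] ℝ, ℓ ≠ 0 ∧
      (x ∈ ball p0 r → ((∀ z ∈ closedBall p0 r, ℓ z < ℓ x → f z < f x) ∧
        (∀ z ∈ closedBall p0 r, ℓ x < ℓ z → f x < f z))) := by
    intro x
    by_cases hx : x ∈ ball p0 r
    · obtain ⟨ℓ, h0, h1, h2⟩ := sep_lemma hr hKU hinj H hx
      exact ⟨ℓ, h0, fun _ => ⟨h1, h2⟩⟩
    · refine ⟨ContinuousLinearMap.fst ℝ ℝ ℝ, ?_, fun h => absurd h hx⟩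
      intro h0
      have := DFunLike.congr_fun h0 ((1:ℝ), (0:ℝ))
      simpa using this
  choose ℓ hℓ0 hℓ using hsep
  -- transfer of the separation property along a level line
  have TL : ∀ x ∈ ball p0 r, ∀ w ∈ ball p0 r, ℓ x w = ℓ x x →
      (∀ z ∈ closedBall p0 r, ℓ x z < ℓ x x → f z < f w) ∧
      (∀ z ∈ closedBall p0 r, ℓ x x < ℓ x z → f w < f z) := by
    intro x hx w hw hwx
    rcases Classical.em (∃ d : ℝ × ℝ, ℓ x d = -1 ∧ ℓ w d = 1) with ⟨d, hd1, hd2⟩ | hno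
    · exfalso
      obtain ⟨c, hc, hpl, hmn, _⟩ := perturb hw d 1 one_pos
      have e1 : ℓ x (w + c • d) = ℓ x x - c := by
        rw [map_add, map_smul, smul_eq_mul, hd1, hwx]; ring
      have e2 : ℓ w (w + c • d) = ℓ w w + c := by
        rw [map_add, map_smul, smul_eq_mul, hd2]; ring
      have e3 : ℓ x (w - c • d) = ℓ x x + c := by
        rw [map_sub, map_smul, smul_eq_mul, hd1, hwx]; ring
      have e4 : ℓ w (w - c • d) = ℓ w w - c := by
        rw [map_sub, map_smul, smul_eq_mul, hd2]; ring
      have f1 : f (w + c • d) < f x :=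
        (hℓ x hx).1 _ (ball_subset_closedBall hpl) (by rw [e1]; linarith)
      have f2 : f w < f (w + c • d) :=
        (hℓ w hw).2 _ (ball_subset_closedBall hpl) (by rw [e2]; linarith)
      have f3 : f x < f (w - c • d) :=
        (hℓ x hx).2 _ (ball_subset_closedBall hmn) (by rw [e3]; linarith)
      have f4 : f (w - c • d) < f w :=
        (hℓ w hw).1 _ (ball_subset_closedBall hmn) (by rw [e4]; linarith)
      linarith
    · obtain ⟨t, ht⟩ := dep_of_no_quadrant (ℓ x) (ℓ w) (hℓ0 x) hno
      have ht0 : t ≠ 0 := by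
        rintro rfl
        exact hℓ0 w (by rw [ht, zero_smul])
      have hdd : ∃ d : ℝ × ℝ, ℓ x d = 1 := by
        have hv : ∃ v, ℓ x v ≠ 0 := by
          by_contra hv
          push_neg at hv
          exact hℓ0 x (ContinuousLinearMap.ext fun z => by simp [hv z])
        obtain ⟨v, hv⟩ := hv
        refine ⟨(ℓ x v)⁻¹ • v, ?_⟩
        rw [map_smul, smul_eq_mul, inv_mul_cancel₀ hv]
      obtain ⟨d, hd⟩ := hdd
      have ew : ∀ z : ℝ × ℝ, ℓ w z = t * ℓ x z := fun z => by
        rw [ht, ContinuousLinearMap.smul_apply, smul_eq_mul]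
      have hT : 0 < t := by
        rcases lt_trichotomy t 0 with hneg | h0 | hpos
        · exfalso
          obtain ⟨c, hc, hpl, hmn, _⟩ := perturb hx d 1 one_pos
          have e1 : ℓ x (x + c • d) = ℓ x x + c := by
            rw [map_add, map_smul, smul_eq_mul, hd]; ring
          have e2 : ℓ x (x - c • d) = ℓ x x - c := by
            rw [map_sub, map_smul, smul_eq_mul, hd]; ring
          have f1 : f x < f (x + c • d) :=
            (hℓ x hx).2 _ (ball_subset_closedBall hpl) (by rw [e1]; linarith)
          have f2 : f (x + c • d) < f w := by
            apply (hℓ w hw).1 _ (ball_subset_closedBall hpl)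
            rw [ew, ew, e1, hwx]
            nlinarith
          have f3 : f (x - c • d) < f x :=
            (hℓ x hx).1 _ (ball_subset_closedBall hmn) (by rw [e2]; linarith)
          have f4 : f w < f (x - c • d) := by
            apply (hℓ w hw).2 _ (ball_subset_closedBall hmn)
            rw [ew, ew, e2, hwx]
            nlinarith
          linarith
        · exact absurd h0 ht0
        · exact hpos
      constructor
      · intro z hz hlt
        apply (hℓ w hw).1 z hz
        rw [ew, ew, hwx]
        exact mul_lt_mul_of_pos_left hlt hT
      · intro z hz hgt
        apply (hℓ w hw).2 z hz
        rw [ew, ew, hwx]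
        exact mul_lt_mul_of_pos_left hgt hT
  -- two points on the level line of x, straddling x
  have hpts : ∀ x : ℝ × ℝ, ∃ ab : (ℝ × ℝ) × (ℝ × ℝ), x ∈ ball p0 r →
      ab.1 ∈ ball p0 r ∧ ab.2 ∈ ball p0 r ∧ ℓ x ab.1 = ℓ x x ∧ ℓ x ab.2 = ℓ x x ∧
      x ∈ segment ℝ ab.1 ab.2 ∧ x ≠ ab.1 ∧ x ≠ ab.2 := by
    intro x
    by_cases hx : x ∈ ball p0 r
    · have hker : ℓ x (-(ℓ x (0, 1)), ℓ x (1, 0)) = 0 := by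
        rw [lin_eval]
        show -(ℓ x (0,1)) * ℓ x (1,0) + ℓ x (1,0) * ℓ x (0,1) = 0
        ring
      have hv0 : ((-(ℓ x (0, 1)), ℓ x (1, 0)) : ℝ × ℝ) ≠ 0 := by
        intro h
        rcases lin_ne_zero_coord (ℓ x) (hℓ0 x) with hA | hA
        · exact hA (by simpa using congrArg Prod.snd h)
        · exact hA (by have := congrArg Prod.fst h; simpa [neg_eq_zero] using this)
      obtain ⟨c, hc, hpl, hmn, _⟩ := perturb hx (-(ℓ x (0, 1)), ℓ x (1, 0)) 1 one_pos
      have hcv : c • ((-(ℓ x (0, 1)), ℓ x (1, 0)) : ℝ × ℝ) ≠ 0 :=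
        smul_ne_zero (ne_of_gt hc) hv0
      refine ⟨(x - c • (-(ℓ x (0, 1)), ℓ x (1, 0)), x + c • (-(ℓ x (0, 1)), ℓ x (1, 0))),
        fun _ => ⟨hmn, hpl, ?_, ?_,
        mem_segment_sub_add (𝕜 := ℝ) x (c • (-(ℓ x (0, 1)), ℓ x (1, 0))), ?_, ?_⟩⟩
      · show ℓ x (x - c • (-(ℓ x (0, 1)), ℓ x (1, 0))) = ℓ x x
        rw [map_sub, map_smul, smul_eq_mul, hker]; ring
      · show ℓ x (x + c • (-(ℓ x (0, 1)), ℓ x (1, 0))) = ℓ x x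
        rw [map_add, map_smul, smul_eq_mul, hker]; ring
      · intro h; exact hcv (sub_eq_self.mp h.symm)
      · intro h; exact hcv (add_eq_left.mp h.symm)
    · exact ⟨(x, x), fun h => absurd h hx⟩
  choose ab hab using hpts
  set a : ℝ × ℝ → ℝ × ℝ := fun x => (ab x).1 with ha_def
  set b : ℝ × ℝ → ℝ × ℝ := fun x => (ab x).2 with hb_def
  have hstrad : ∀ x ∈ ball p0 r,
      min (f (a x)) (f (b x)) < f x ∧ f x < max (f (a x)) (f (b x)) := by
    intro x hx
    obtain ⟨h1, h2, _, _, h5, h6, h7⟩ := hab x hx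
    exact strictBtw hKU hinj H (ball_subset_closedBall h1) (ball_subset_closedBall h2)
      (ball_subset_closedBall hx) h5 h6 h7
  have hqex : ∀ x : ℝ × ℝ, ∃ qq : ℚ, x ∈ ball p0 r →
      (min (f (a x)) (f (b x)) < (qq:ℝ) ∧ (qq:ℝ) < max (f (a x)) (f (b x))) := by
    intro x
    by_cases hx : x ∈ ball p0 r
    · obtain ⟨qq, hq1, hq2⟩ := exists_rat_btwn ((hstrad x hx).1.trans (hstrad x hx).2)
      exact ⟨qq, fun _ => ⟨hq1, hq2⟩⟩
    · exact ⟨0, fun h => absurd h hx⟩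
  choose q hq using hqex
  -- meeting level lines are proportional
  have meet_line : ∀ x ∈ ball p0 r, ∀ y ∈ ball p0 r,
      (∃ w ∈ ball p0 r, ℓ x w = ℓ x x ∧ ℓ y w = ℓ y y) →
      (∃ t : ℝ, t ≠ 0 ∧ ℓ y = t • ℓ x) ∧ ℓ x y = ℓ x x := by
    intro x hx y hy hmeet
    obtain ⟨w, hw, hw1, hw2⟩ := hmeet
    rcases Classical.em (∃ d : ℝ × ℝ, ℓ x d = -1 ∧ ℓ y d = 1) with ⟨d, hd1, hd2⟩ | hno
    · exfalso
      obtain ⟨c, hc, hpl, hmn, _⟩ := perturb hw d 1 one_pos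
      have e1 : ℓ x (w + c • d) = ℓ x x - c := by
        rw [map_add, map_smul, smul_eq_mul, hd1, hw1]; ring
      have e2 : ℓ y (w + c • d) = ℓ y y + c := by
        rw [map_add, map_smul, smul_eq_mul, hd2, hw2]; ring
      have e3 : ℓ x (w - c • d) = ℓ x x + c := by
        rw [map_sub, map_smul, smul_eq_mul, hd1, hw1]; ring
      have e4 : ℓ y (w - c • d) = ℓ y y - c := by
        rw [map_sub, map_smul, smul_eq_mul, hd2, hw2]; ring
      have f1 : f (w + c • d) < f x :=
        (hℓ x hx).1 _ (ball_subset_closedBall hpl) (by rw [e1]; linarith)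
      have f2 : f y < f (w + c • d) :=
        (hℓ y hy).2 _ (ball_subset_closedBall hpl) (by rw [e2]; linarith)
      have f3 : f x < f (w - c • d) :=
        (hℓ x hx).2 _ (ball_subset_closedBall hmn) (by rw [e3]; linarith)
      have f4 : f (w - c • d) < f y :=
        (hℓ y hy).1 _ (ball_subset_closedBall hmn) (by rw [e4]; linarith)
      linarith
    · obtain ⟨t, ht⟩ := dep_of_no_quadrant (ℓ x) (ℓ y) (hℓ0 x) hno
      have ht0 : t ≠ 0 := by
        rintro rfl
        exact hℓ0 y (by rw [ht, zero_smul])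
      have ew : ∀ z : ℝ × ℝ, ℓ y z = t * ℓ x z := fun z => by
        rw [ht, ContinuousLinearMap.smul_apply, smul_eq_mul]
      refine ⟨⟨t, ht0, ht⟩, ?_⟩
      have h2 := hw2
      rw [ew, ew] at h2
      have h3 : ℓ x w = ℓ x y := mul_left_cancel₀ ht0 h2
      rw [← h3]
      exact hw1
  -- key disjointness of value intervals
  have hdisjI : ∀ x ∈ ball p0 r, ∀ y ∈ ball p0 r, f x < f y →
      (¬ ∃ w ∈ ball p0 r, ℓ x w = ℓ x x ∧ ℓ y w = ℓ y y) →
      max (f (a x)) (f (b x)) < min (f (a y)) (f (b y)) := by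
    intro x hx y hy hfxy hno
    obtain ⟨hay, hby, hlay, hlby, hyseg, _, _⟩ := hab y hy
    obtain ⟨hax, hbx, hlax, hlbx, _, _, _⟩ := hab x hx
    have hside : ∀ z, z ∈ segment ℝ (a y) (b y) → ℓ x z ≠ ℓ x x := by
      intro z hzseg hzeq
      apply hno
      refine ⟨z, (convex_ball p0 r).segment_subset hay hby hzseg, hzeq, ?_⟩
      obtain ⟨s, t, hs, ht, hst, rfl⟩ := hzseg
      rw [map_add, map_smul, map_smul, smul_eq_mul, smul_eq_mul, hlay, hlby]
      linear_combination (ℓ y y) * hst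
    have h1 := hside (a y) (left_mem_segment ℝ _ _)
    have h2 := hside (b y) (right_mem_segment ℝ _ _)
    have hcross : ∀ A B : ℝ × ℝ, A ∈ segment ℝ (a y) (b y) → B ∈ segment ℝ (a y) (b y) →
        ℓ x A < ℓ x x → ℓ x x < ℓ x B → False := by
      intro A B hA hB hAlt hBgt
      obtain ⟨s, t, hs, ht, hst, hcomb⟩ := hit_combo hAlt hBgt
      have hzseg : s • A + t • B ∈ segment ℝ (a y) (b y) :=
        (convex_segment (a y) (b y)) hA hB hs ht hst
      apply hside _ hzseg
      rw [map_add, map_smul, map_smul, smul_eq_mul, smul_eq_mul]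
      exact hcomb
    have htri : (ℓ x x < ℓ x (a y) ∧ ℓ x x < ℓ x (b y)) ∨
        (ℓ x (a y) < ℓ x x ∧ ℓ x (b y) < ℓ x x) := by
      rcases lt_or_gt_of_ne h1 with hA | hA <;> rcases lt_or_gt_of_ne h2 with hB | hB
      · exact Or.inr ⟨hA, hB⟩
      · exact (hcross _ _ (left_mem_segment ℝ _ _) (right_mem_segment ℝ _ _) hA hB).elim
      · exact (hcross _ _ (right_mem_segment ℝ _ _) (left_mem_segment ℝ _ _) hB hA).elim
      · exact Or.inl ⟨hA, hB⟩
    rcases htri with ⟨hA, hB⟩ | ⟨hA, hB⟩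
    · have Hax := (TL x hx (a x) hax hlax).2
      have Hbx := (TL x hx (b x) hbx hlbx).2
      exact max_lt
        (lt_min (Hax _ (ball_subset_closedBall hay) hA) (Hax _ (ball_subset_closedBall hby) hB))
        (lt_min (Hbx _ (ball_subset_closedBall hay) hA) (Hbx _ (ball_subset_closedBall hby) hB))
    · exfalso
      obtain ⟨s, t, hs, ht, hst, hyeq⟩ := hyseg
      have hylt : ℓ x y < ℓ x x := by
        rw [← hyeq, map_add, map_smul, map_smul, smul_eq_mul, smul_eq_mul]
        exact combo_lt hs ht hst hA hB
      have := (hℓ x hx).1 y (ball_subset_closedBall hy) hylt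
      linarith
  -- families of points
  have hmemfam : ∀ (e : ℝ × ℝ), ‖e‖ = 1 → ∀ s ∈ Ioo (0:ℝ) r, p0 + s • e ∈ ball p0 r := by
    intro e he s hs
    rw [mem_ball, dist_eq_norm, add_sub_cancel_left, norm_smul, he, Real.norm_eq_abs,
      abs_of_pos hs.1, mul_one]
    exact hs.2
  have main : ∀ e : ℝ × ℝ, ‖e‖ = 1 →
      (∀ s ∈ Ioo (0:ℝ) r, ∀ s' ∈ Ioo (0:ℝ) r, s ≠ s' →
        ¬ ∃ w ∈ ball p0 r, ℓ (p0 + s • e) w = ℓ (p0 + s • e) (p0 + s • e) ∧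
          ℓ (p0 + s' • e) w = ℓ (p0 + s' • e) (p0 + s' • e)) → False := by
    intro e he hgood
    have hinj2 : ∀ s ∈ Ioo (0:ℝ) r, ∀ s' ∈ Ioo (0:ℝ) r, s ≠ s' →
        q (p0 + s • e) ≠ q (p0 + s' • e) := by
      intro s hs s' hs' hne'
      have hxm := hmemfam e he s hs
      have hym := hmemfam e he s' hs'
      have hxy : p0 + s • e ≠ p0 + s' • e := by
        intro hcon
        apply hne'
        have h1 : s • e = s' • e := add_left_cancel hcon
        have h2 : (s - s') • e = 0 := by rw [sub_smul, h1, sub_self]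
        rcases smul_eq_zero.mp h2 with h | h
        · linarith [sub_eq_zero.mp h]
        · rw [h] at he; simp at he
      have hf : f (p0 + s • e) ≠ f (p0 + s' • e) := fun h =>
        hxy (hinj (hKU (ball_subset_closedBall hxm)) (hKU (ball_subset_closedBall hym)) h)
      obtain ⟨hq1, hq2⟩ := hq _ hxm
      obtain ⟨hq1', hq2'⟩ := hq _ hym
      rcases lt_or_gt_of_ne hf with hlt | hgt
      · have hsep2 := hdisjI _ hxm _ hym hlt (hgood s hs s' hs' hne')
        intro hcon
        rw [hcon] at hq2
        linarith
      · have hsep2 := hdisjI _ hym _ hxm hgt (by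
          rintro ⟨w, hw, hw1, hw2⟩
          exact hgood s hs s' hs' hne' ⟨w, hw, hw2, hw1⟩)
        intro hcon
        rw [hcon] at hq1
        linarith
    have hcnt : Countable (Ioo (0:ℝ) r) := by
      have hqinj : Function.Injective (fun s : Ioo (0:ℝ) r => q (p0 + (s:ℝ) • e)) := by
        intro s s' hqq
        by_contra hne'
        exact hinj2 s s.2 s' s'.2 (fun hc => hne' (Subtype.ext hc)) hqq
      exact hqinj.countable
    have hcard := Cardinal.mk_le_aleph0_iff.mpr hcnt
    rw [Cardinal.mk_Ioo_real hr] at hcard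
    exact absurd hcard (not_le.mpr Cardinal.aleph0_lt_continuum)
  have hbad : ∀ (e : ℝ × ℝ), ‖e‖ = 1 → ∀ s ∈ Ioo (0:ℝ) r, ∀ s' ∈ Ioo (0:ℝ) r, s ≠ s' →
      (∃ w ∈ ball p0 r, ℓ (p0 + s • e) w = ℓ (p0 + s • e) (p0 + s • e) ∧
        ℓ (p0 + s' • e) w = ℓ (p0 + s' • e) (p0 + s' • e)) →
      ℓ (p0 + s • e) e = 0 := by
    intro e he s hs s' hs' hne' hmeet
    have hxm := hmemfam e he s hs
    have hym := hmemfam e he s' hs'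
    have h2 := (meet_line _ hxm _ hym hmeet).2
    rw [map_add, map_add, map_smul, map_smul, smul_eq_mul, smul_eq_mul] at h2
    have h3 : (s' - s) * ℓ (p0 + s • e) e = 0 := by linear_combination h2
    rcases mul_eq_zero.mp h3 with h | h
    · exact absurd (sub_eq_zero.mp h).symm hne'
    · exact h
  have hn2 : ‖(((0:ℝ), (1:ℝ)) : ℝ × ℝ)‖ = 1 := by
    rw [Prod.norm_def]
    norm_num
  have hn1 : ‖(((1:ℝ), (0:ℝ)) : ℝ × ℝ)‖ = 1 := by
    rw [Prod.norm_def]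
    norm_num
  by_cases hvert : ∀ s ∈ Ioo (0:ℝ) r, ∀ s' ∈ Ioo (0:ℝ) r, s ≠ s' →
      ¬ ∃ w ∈ ball p0 r,
        ℓ (p0 + s • (((0:ℝ), (1:ℝ)) : ℝ × ℝ)) w =
          ℓ (p0 + s • (((0:ℝ), (1:ℝ)) : ℝ × ℝ)) (p0 + s • (((0:ℝ), (1:ℝ)) : ℝ × ℝ)) ∧
        ℓ (p0 + s' • (((0:ℝ), (1:ℝ)) : ℝ × ℝ)) w =
          ℓ (p0 + s' • (((0:ℝ), (1:ℝ)) : ℝ × ℝ)) (p0 + s' • (((0:ℝ), (1:ℝ)) : ℝ × ℝ))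
  · exact main _ hn2 hvert
  · push_neg at hvert
    obtain ⟨s, hs, s', hs', hne', hmeet⟩ := hvert
    have hE2 : ℓ (p0 + s • (((0:ℝ), (1:ℝ)) : ℝ × ℝ)) ((0:ℝ), (1:ℝ)) = 0 :=
      hbad _ hn2 s hs s' hs' hne' hmeet
    apply main _ hn1
    intro t ht t' ht' hne'' hmeet'
    have hE1 : ℓ (p0 + t • (((1:ℝ), (0:ℝ)) : ℝ × ℝ)) ((1:ℝ), (0:ℝ)) = 0 :=
      hbad _ hn1 t ht t' ht' hne'' hmeet'
    have hxm := hmemfam _ hn2 s hs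
    have hym := hmemfam _ hn1 t ht
    have hmeet2 : ∃ w ∈ ball p0 r,
        ℓ (p0 + s • (((0:ℝ), (1:ℝ)) : ℝ × ℝ)) w =
          ℓ (p0 + s • (((0:ℝ), (1:ℝ)) : ℝ × ℝ)) (p0 + s • (((0:ℝ), (1:ℝ)) : ℝ × ℝ)) ∧
        ℓ (p0 + t • (((1:ℝ), (0:ℝ)) : ℝ × ℝ)) w =
          ℓ (p0 + t • (((1:ℝ), (0:ℝ)) : ℝ × ℝ)) (p0 + t • (((1:ℝ), (0:ℝ)) : ℝ × ℝ)) := by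
      refine ⟨p0, mem_ball_self hr, ?_, ?_⟩
      · rw [map_add, map_smul, smul_eq_mul, hE2, mul_zero, add_zero]
      · rw [map_add, map_smul, smul_eq_mul, hE1, mul_zero, add_zero]
    obtain ⟨⟨T, hT0, hTeq⟩, _⟩ := meet_line _ hxm _ hym hmeet2
    have hyt2 : ℓ (p0 + t • (((1:ℝ), (0:ℝ)) : ℝ × ℝ)) ((0:ℝ), (1:ℝ)) =
        T * ℓ (p0 + s • (((0:ℝ), (1:ℝ)) : ℝ × ℝ)) ((0:ℝ), (1:ℝ)) := by
      rw [hTeq, ContinuousLinearMap.smul_apply, smul_eq_mul]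
    apply hℓ0 (p0 + t • (((1:ℝ), (0:ℝ)) : ℝ × ℝ))
    apply ContinuousLinearMap.ext
    intro z
    rw [lin_eval, hE1, hyt2, hE2, ContinuousLinearMap.zero_apply]
    ring
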